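/- Let X be an ideal of L⁰(Ω, Σ, ℙ) and Y an order closed sublattice of X containing the constant function 1. Then G := {A ∈ Σ : χ_A ∈ Y} is a σ-algebra (containing all ℙ-null sets, where χ_A is identified with 0 when ℙ(A) = 0). -/

import Mathlib

open MeasureTheory Filter

universe u

variable {Ω : Type u}

/-- An ideal (solid subspace) of `L⁰`. -/
def IsIdealL0 {m0 : MeasurableSpace Ω} {μ : Measure Ω} (X : Submodule ℝ (Ω →ₘ[μ] ℝ)) : Prop :=
  ∀ x y : Ω →ₘ[μ] ℝ, |x| ≤ |y| → y ∈ X → x ∈ X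

/-- Order convergence of a net `y` to `x` within the subspace `X` of `L⁰`: there is a net
`z` in `X`, antitone, with infimum `0` relative to `X`, eventually dominating `|y a - x|`. -/
def OrderConvNetIn {m0 : MeasurableSpace Ω} {μ : Measure Ω} (X : Submodule ℝ (Ω →ₘ[μ] ℝ))
    {ι : Type*} [Preorder ι] (y : ι → (Ω →ₘ[μ] ℝ)) (x : Ω →ₘ[μ] ℝ) : Prop :=
  ∃ z : ι → (Ω →ₘ[μ] ℝ), (∀ a, z a ∈ X) ∧ Antitone z ∧ (∀ a, 0 ≤ z a) ∧
    (∀ h ∈ X, (∀ a, h ≤ z a) → h ≤ 0) ∧ ∀ᶠ a in atTop, |y a - x| ≤ z a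

/-- A subset `Y` of `X ⊆ L⁰` is order closed in `X` if it contains the limit of any net of
its elements order-converging (within `X`) to an element of `X`. -/
def OrderClosedIn {m0 : MeasurableSpace Ω} {μ : Measure Ω} (X : Submodule ℝ (Ω →ₘ[μ] ℝ))
    (Y : Set (Ω →ₘ[μ] ℝ)) : Prop :=
  ∀ (ι : Type u) (_ : Preorder ι) (_ : IsDirected ι (· ≤ ·)) (_ : Nonempty ι)
    (y : ι → (Ω →ₘ[μ] ℝ)) (x : Ω →ₘ[μ] ℝ),
    (∀ a, y a ∈ Y) → x ∈ X → OrderConvNetIn X y x → x ∈ Y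

/-- The indicator of a measurable set, as an element of `L⁰`. -/
noncomputable def chiL0 {m0 : MeasurableSpace Ω} (μ : Measure Ω) (A : Set Ω)
    (hA : MeasurableSet A) : Ω →ₘ[μ] ℝ :=
  AEEqFun.mk (A.indicator fun _ => (1 : ℝ))
    ((measurable_const.indicator hA).aestronglyMeasurable)

lemma chiL0_coe {m0 : MeasurableSpace Ω} {μ : Measure Ω} {A : Set Ω} (hA : MeasurableSet A) :
    ⇑(chiL0 μ A hA) =ᵐ[μ] A.indicator (fun _ => (1 : ℝ)) :=
  AEEqFun.coeFn_mk _ _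

lemma chiL0_congr {m0 : MeasurableSpace Ω} {μ : Measure Ω} {A B : Set Ω}
    (hA : MeasurableSet A) (hB : MeasurableSet B) (h : A = B) :
    chiL0 μ A hA = chiL0 μ B hB := by subst h; rfl

instance instAddLeftMonoAEEqFun {m0 : MeasurableSpace Ω} {μ : Measure Ω} :
    AddLeftMono (Ω →ₘ[μ] ℝ) := by
  constructor
  intro c a b h
  rw [← AEEqFun.coeFn_le] at h ⊢
  filter_upwards [h, AEEqFun.coeFn_add c a, AEEqFun.coeFn_add c b] with ω h1 h2 h3
  rw [h2, h3]
  exact add_le_add_right h1 _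

instance instIsOrderedAddMonoidAEEqFun {m0 : MeasurableSpace Ω} {μ : Measure Ω} :
    IsOrderedAddMonoid (Ω →ₘ[μ] ℝ) :=
  { add_le_add_left := fun a b h c => by
      rw [add_comm a c, add_comm b c]; exact add_le_add_right h c }

lemma chiL0_nonneg {m0 : MeasurableSpace Ω} {μ : Measure Ω} {A : Set Ω}
    (hA : MeasurableSet A) : (0 : Ω →ₘ[μ] ℝ) ≤ chiL0 μ A hA := by
  rw [← AEEqFun.coeFn_le]
  filter_upwards [chiL0_coe hA, AEEqFun.coeFn_zero (β := ℝ) (μ := μ)] with ω h1 h2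
  rw [h1, h2]
  exact Set.indicator_nonneg (fun _ _ => zero_le_one) ω

lemma chiL0_le_one {m0 : MeasurableSpace Ω} {μ : Measure Ω} {A : Set Ω}
    (hA : MeasurableSet A) : chiL0 μ A hA ≤ 1 := by
  rw [← AEEqFun.coeFn_le]
  filter_upwards [chiL0_coe hA, AEEqFun.coeFn_one (β := ℝ) (μ := μ)] with ω h1 h2
  rw [h1, h2]
  exact Set.indicator_le_self' (fun _ _ => zero_le_one) ω

lemma abs_chiL0_le_abs_one {m0 : MeasurableSpace Ω} {μ : Measure Ω} {A : Set Ω}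
    (hA : MeasurableSet A) : |chiL0 μ A hA| ≤ |(1 : Ω →ₘ[μ] ℝ)| := by
  rw [← AEEqFun.coeFn_le]
  filter_upwards [AEEqFun.coeFn_abs (chiL0 μ A hA), AEEqFun.coeFn_abs (1 : Ω →ₘ[μ] ℝ),
    chiL0_coe hA, AEEqFun.coeFn_one (β := ℝ) (μ := μ)] with ω h1 h2 h3 h4
  rw [h1, h2, h3, h4]
  simp only [Pi.one_apply, abs_one]
  by_cases hω : ω ∈ A <;> simp [Set.indicator_apply, hω]

lemma chiL0_mem_X {m0 : MeasurableSpace Ω} {μ : Measure Ω}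
    {X : Submodule ℝ (Ω →ₘ[μ] ℝ)} (hX : IsIdealL0 X) (h1X : (1 : Ω →ₘ[μ] ℝ) ∈ X)
    {A : Set Ω} (hA : MeasurableSet A) : chiL0 μ A hA ∈ X :=
  hX _ 1 (abs_chiL0_le_abs_one hA) h1X

lemma sup_mem_Y {m0 : MeasurableSpace Ω} {μ : Measure Ω}
    {Y : Submodule ℝ (Ω →ₘ[μ] ℝ)} (hsub : ∀ y ∈ Y, |y| ∈ Y)
    {a b : Ω →ₘ[μ] ℝ} (ha : a ∈ Y) (hb : b ∈ Y) : a ⊔ b ∈ Y := by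
  rw [sup_eq_half_smul_add_add_abs_sub' ℝ a b]
  exact Y.smul_mem _ (Y.add_mem (Y.add_mem ha hb) (hsub _ (Y.sub_mem hb ha)))

lemma chiL0_union {m0 : MeasurableSpace Ω} {μ : Measure Ω} {A B : Set Ω}
    (hA : MeasurableSet A) (hB : MeasurableSet B) :
    chiL0 μ (A ∪ B) (hA.union hB) = chiL0 μ A hA ⊔ chiL0 μ B hB := by
  refine AEEqFun.ext ?_
  filter_upwards [chiL0_coe (hA.union hB), AEEqFun.coeFn_sup (chiL0 μ A hA) (chiL0 μ B hB),
    chiL0_coe hA, chiL0_coe hB] with ω h1 h2 h3 h4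
  rw [h1, h2, h3, h4]
  by_cases hωA : ω ∈ A <;> by_cases hωB : ω ∈ B <;>
    simp [Set.indicator_apply, hωA, hωB]

lemma chiL0_compl {m0 : MeasurableSpace Ω} {μ : Measure Ω} {A : Set Ω}
    (hA : MeasurableSet A) :
    chiL0 μ Aᶜ hA.compl = 1 - chiL0 μ A hA := by
  refine AEEqFun.ext ?_
  filter_upwards [chiL0_coe hA.compl, AEEqFun.coeFn_sub (1 : Ω →ₘ[μ] ℝ) (chiL0 μ A hA),
    AEEqFun.coeFn_one (β := ℝ) (μ := μ), chiL0_coe hA] with ω h1 h2 h3 h4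
  rw [h1, h2, Pi.sub_apply, h3, h4]
  by_cases hωA : ω ∈ A <;> simp [Set.indicator_apply, hωA]

lemma chiL0_null {m0 : MeasurableSpace Ω} {μ : Measure Ω} {A : Set Ω}
    (hA : MeasurableSet A) (h0 : μ A = 0) : chiL0 μ A hA = 0 := by
  refine AEEqFun.ext ?_
  have hnm : ∀ᵐ ω ∂μ, ω ∉ A := by
    rw [ae_iff]; simpa using h0
  filter_upwards [chiL0_coe hA, AEEqFun.coeFn_zero (β := ℝ) (μ := μ), hnm] with ω h1 h2 h3
  rw [h1, h2, Set.indicator_of_notMem h3]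
  rfl

/-- If `Y` is an order closed sublattice of an ideal `X` of `L⁰` with `1 ∈ Y`,
then `G = {A ∈ Σ : χ_A ∈ Y}` is a σ-algebra containing all null sets. -/
theorem indicator_sets_sigmaAlgebra
    {m0 : MeasurableSpace Ω} {μ : Measure Ω} [IsProbabilityMeasure μ]
    (X : Submodule ℝ (Ω →ₘ[μ] ℝ)) (hX : IsIdealL0 X)
    (Y : Submodule ℝ (Ω →ₘ[μ] ℝ)) (hYX : (Y : Set (Ω →ₘ[μ] ℝ)) ⊆ X)
    (hsub : ∀ y ∈ Y, |y| ∈ Y) (h1 : (1 : Ω →ₘ[μ] ℝ) ∈ Y)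
    (hclosed : OrderClosedIn X (Y : Set (Ω →ₘ[μ] ℝ))) :
    (∃ h : MeasurableSet (∅ : Set Ω), chiL0 μ ∅ h ∈ Y) ∧
    (∀ A : Set Ω, (∃ h : MeasurableSet A, chiL0 μ A h ∈ Y) →
      ∃ h : MeasurableSet Aᶜ, chiL0 μ Aᶜ h ∈ Y) ∧
    (∀ s : ℕ → Set Ω, (∀ n, ∃ h : MeasurableSet (s n), chiL0 μ (s n) h ∈ Y) →
      ∃ h : MeasurableSet (⋃ n, s n), chiL0 μ (⋃ n, s n) h ∈ Y) ∧
    (∀ A : Set Ω, MeasurableSet A → μ A = 0 →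
      ∃ h : MeasurableSet A, chiL0 μ A h ∈ Y) := by
  have h1X : (1 : Ω →ₘ[μ] ℝ) ∈ X := hYX h1
  refine ⟨⟨MeasurableSet.empty, ?_⟩, ?_, ?_, ?_⟩
  · rw [chiL0_null MeasurableSet.empty (by simp)]
    exact Y.zero_mem
  · rintro A ⟨hA, hAY⟩
    exact ⟨hA.compl, by rw [chiL0_compl hA]; exact Y.sub_mem h1 hAY⟩
  · rintro s hs
    choose hm hY using hs
    have hU : MeasurableSet (⋃ n, s n) := MeasurableSet.iUnion hm
    refine ⟨hU, ?_⟩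
    -- accumulated sets
    have hBm : ∀ n : ℕ, MeasurableSet (Set.accumulate s n) := fun n =>
      MeasurableSet.biUnion (Set.to_countable _) (fun k _ => hm k)
    have hacc_succ : ∀ n : ℕ, Set.accumulate s (n + 1) = Set.accumulate s n ∪ s (n + 1) := by
      intro n
      ext ω
      simp only [Set.mem_accumulate, Set.mem_union, Nat.le_add_one_iff]
      constructor
      · rintro ⟨k, hk | hk, hks⟩
        · exact Or.inl ⟨k, hk, hks⟩
        · exact Or.inr (hk ▸ hks)
      · rintro (⟨k, hk, hks⟩ | h)
        · exact ⟨k, Or.inl hk, hks⟩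
        · exact ⟨n + 1, Or.inr rfl, h⟩
    have hBY : ∀ n : ℕ, chiL0 μ (Set.accumulate s n) (hBm n) ∈ Y := by
      intro n
      induction n with
      | zero =>
        rw [chiL0_congr (hBm 0) (hm 0) (by ext ω; simp [Set.mem_accumulate, Nat.le_zero])]
        exact hY 0
      | succ n ih =>
        rw [chiL0_congr (hBm (n+1)) ((hBm n).union (hm (n+1))) (hacc_succ n),
          chiL0_union (hBm n) (hm (n+1))]
        exact sup_mem_Y hsub ih (hY (n+1))
    -- the index net and the dominating net
    let x : Ω →ₘ[μ] ℝ := chiL0 μ (⋃ n, s n) hU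
    let w : ℕ → (Ω →ₘ[μ] ℝ) := fun n => chiL0 μ (Set.accumulate s n) (hBm n)
    have hBsub : ∀ n : ℕ, Set.accumulate s n ⊆ ⋃ k, s k := fun n =>
      Set.accumulate_subset_iUnion n
    have hwx : ∀ n : ℕ, w n ≤ x := by
      intro n
      rw [← AEEqFun.coeFn_le]
      filter_upwards [chiL0_coe (hBm n), chiL0_coe hU] with ω hw1 hw2
      rw [hw1, hw2]
      exact Set.indicator_le_indicator_of_subset (hBsub n) (fun _ => zero_le_one) ω
    have hxX : x ∈ X := chiL0_mem_X hX h1X hU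
    haveI hdir : IsDirected (ULift.{u} ℕ) (· ≤ ·) :=
      ⟨fun a b => ⟨a ⊔ b, le_sup_left, le_sup_right⟩⟩
    refine hclosed (ULift.{u} ℕ) inferInstance hdir ⟨⟨0⟩⟩
      (fun a => w a.down) x (fun a => hBY a.down) hxX
      ⟨fun a => x - w a.down, fun a => X.sub_mem hxX (chiL0_mem_X hX h1X (hBm a.down)),
        ?_, fun a => sub_nonneg.mpr (hwx a.down), ?_, ?_⟩
    · -- antitone
      intro a b hab
      have hab' : a.down ≤ b.down := ULift.down_le.mpr hab
      apply sub_le_sub_left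
      rw [← AEEqFun.coeFn_le]
      filter_upwards [chiL0_coe (hBm a.down), chiL0_coe (hBm b.down)] with ω hw1 hw2
      rw [hw1, hw2]
      exact Set.indicator_le_indicator_of_subset (Set.monotone_accumulate hab')
        (fun _ => zero_le_one) ω
    · -- infimum is 0
      intro h _ hle
      rw [← AEEqFun.coeFn_le]
      have hae : ∀ᵐ ω ∂μ, ∀ n : ℕ, h ω ≤ (x - w n) ω := by
        rw [ae_all_iff]
        intro n
        exact AEEqFun.coeFn_le.mpr (hle ⟨n⟩)
      have hz_coe : ∀ᵐ ω ∂μ, ∀ n : ℕ, (x - w n) ω =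
          (⋃ k, s k).indicator (fun _ => (1:ℝ)) ω
            - (Set.accumulate s n).indicator (fun _ => (1:ℝ)) ω := by
        rw [ae_all_iff]
        intro n
        filter_upwards [AEEqFun.coeFn_sub x (w n), chiL0_coe hU, chiL0_coe (hBm n)]
          with ω hw1 hw2 hw3
        rw [hw1, Pi.sub_apply, hw2, hw3]
      filter_upwards [hae, hz_coe, AEEqFun.coeFn_zero (β := ℝ) (μ := μ)] with ω hw1 hw2 hw3
      rw [hw3]
      show h ω ≤ (0 : ℝ)
      by_cases hωU : ω ∈ ⋃ k, s k
      · obtain ⟨k, hk⟩ := Set.mem_iUnion.mp hωU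
        have hωB : ω ∈ Set.accumulate s k := Set.subset_accumulate hk
        have := hw1 k
        rw [hw2 k, Set.indicator_of_mem hωU, Set.indicator_of_mem hωB] at this
        simpa using this
      · have := hw1 0
        rw [hw2 0, Set.indicator_of_notMem hωU,
          Set.indicator_of_notMem (fun hc => hωU (hBsub 0 hc))] at this
        simpa using this
    · -- eventual domination
      refine Eventually.of_forall fun a => ?_
      rw [← AEEqFun.coeFn_le]
      filter_upwards [AEEqFun.coeFn_abs (w a.down - x),
        AEEqFun.coeFn_sub (w a.down) x, AEEqFun.coeFn_sub x (w a.down),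
        AEEqFun.coeFn_le.mpr (hwx a.down)] with ω hw1 hw2 hw3 hw4
      rw [hw1, hw2, hw3, Pi.sub_apply, Pi.sub_apply, abs_sub_comm]
      exact le_of_eq (abs_of_nonneg (sub_nonneg.mpr hw4))
  · intro A hA h0
    exact ⟨hA, by rw [chiL0_null hA h0]; exact Y.zero_mem⟩
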